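/- For all real numbers a, b and every exponent p with 1 < p ≤ 2, there exists a constant α > 0 depending only on p such that (|a|^{p-2}a - |b|^{p-2}b)(a - b) ≥ α |a-b|^2 (|a|+|b|)^{p-2}, where the right-hand side is interpreted as 0 when a = b = 0. -/

import Mathlib

open Real

private lemma core_ineq (p t : ℝ) (hp1 : 1 < p) (hp2 : p ≤ 2) (h1 : -1 ≤ t) (h2 : t ≤ 1) :
    (p - 1) * (1 - t) ≤ 1 - |t| ^ (p - 2) * t := by
  rcases le_or_gt 0 t with ht | ht
  · rw [abs_of_nonneg ht]
    rcases eq_or_lt_of_le ht with h0 | h0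
    · rw [← h0]
      simp only [mul_zero, sub_zero]
      nlinarith
    · have h : t ^ (p - 2) * t = t ^ (p - 1) := by
        rw [show p - 1 = (p - 2) + 1 by ring, Real.rpow_add_one h0.ne']
      rw [h]
      have hb := rpow_one_add_le_one_add_mul_self (s := t - 1)
        (by linarith) (p := p - 1) (by linarith) (by linarith)
      rw [show (1 : ℝ) + (t - 1) = t by ring] at hb
      nlinarith
  · rw [abs_of_neg ht]
    have hpos : 0 < -t := by linarith
    have h : (-t) ^ (p - 1) ≤ (-t) ^ (p - 2) * (-t) := by
      rw [show p - 1 = (p - 2) + 1 by ring, Real.rpow_add_one hpos.ne']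
    have h2' : (-t) ^ (1 : ℝ) ≤ (-t) ^ (p - 1) :=
      Real.rpow_le_rpow_of_exponent_ge hpos (by linarith) (by linarith)
    rw [Real.rpow_one] at h2'
    nlinarith

private lemma key_ineq (p a b : ℝ) (hp1 : 1 < p) (hp2 : p ≤ 2) (hab : b < a) (hb : -b ≤ a) :
    (p - 1) * (a - b) ^ 2 * (|a| + |b|) ^ (p - 2) ≤
      (|a| ^ (p - 2) * a - |b| ^ (p - 2) * b) * (a - b) := by
  have ha : 0 < a := by linarith
  set t := b / a with htdef
  have hbt : b = a * t := by rw [htdef]; field_simp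
  have ht1 : -1 ≤ t := by rw [htdef, le_div_iff₀ ha]; linarith
  have ht2 : t ≤ 1 := by rw [htdef, div_le_one ha]; linarith
  have habs : |a| = a := abs_of_pos ha
  -- rewrite φ a
  have hfa : |a| ^ (p - 2) * a = a ^ (p - 2) * a := by rw [habs]
  -- rewrite φ b
  have hfb : |b| ^ (p - 2) * b = a ^ (p - 2) * a * (|t| ^ (p - 2) * t) := by
    rw [hbt, abs_mul, habs, Real.mul_rpow ha.le (abs_nonneg t)]; ring
  have hcore := core_ineq p t hp1 hp2 ht1 ht2
  have hrpow : (|a| + |b|) ^ (p - 2) ≤ a ^ (p - 2) :=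
    Real.rpow_le_rpow_of_nonpos ha (by rw [habs]; linarith [abs_nonneg b]) (by linarith)
  have hap : 0 < a ^ (p - 2) := Real.rpow_pos_of_pos ha _
  have h1t : 0 ≤ 1 - t := by linarith
  have hamb : a - b = a * (1 - t) := by rw [hbt]; ring
  rw [hfa, hfb, hamb]
  have hstep : (p - 1) * (1 - t) * ((1 - t)) ≤ (1 - |t| ^ (p - 2) * t) * (1 - t) :=
    mul_le_mul_of_nonneg_right hcore h1t
  have hrw : (a ^ (p - 2) * a - a ^ (p - 2) * a * (|t| ^ (p - 2) * t)) * (a * (1 - t))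
      = a ^ (p - 2) * a ^ 2 * ((1 - |t| ^ (p - 2) * t) * (1 - t)) := by ring
  have hrw2 : (p - 1) * (a * (1 - t)) ^ 2 * (|a| + |b|) ^ (p - 2)
      = (a ^ 2 * (1 - t) ^ 2) * ((p - 1) * (|a| + |b|) ^ (p - 2)) := by ring
  rw [hrw, hrw2]
  have hq : 0 ≤ a ^ 2 * (1 - t) ^ 2 := by positivity
  have hRpos : 0 ≤ (|a| + |b|) ^ (p - 2) := by positivity
  calc (a ^ 2 * (1 - t) ^ 2) * ((p - 1) * (|a| + |b|) ^ (p - 2))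
      ≤ (a ^ 2 * (1 - t) ^ 2) * ((p - 1) * a ^ (p - 2)) := by
        apply mul_le_mul_of_nonneg_left _ hq
        exact mul_le_mul_of_nonneg_left hrpow (by linarith)
    _ = a ^ (p - 2) * a ^ 2 * ((p - 1) * (1 - t) * (1 - t)) := by ring
    _ ≤ a ^ (p - 2) * a ^ 2 * ((1 - |t| ^ (p - 2) * t) * (1 - t)) := by
        apply mul_le_mul_of_nonneg_left hstep (by positivity)

theorem signed_power_monotonicity_p_le_two (p : ℝ) (hp1 : 1 < p) (hp2 : p ≤ 2) :
    ∃ α : ℝ, 0 < α ∧ ∀ a b : ℝ,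
      (|a| ^ (p - 2) * a - |b| ^ (p - 2) * b) * (a - b) ≥
        α * |a - b| ^ 2 * (|a| + |b|) ^ (p - 2) := by
  refine ⟨p - 1, by linarith, fun a b => ?_⟩
  rw [ge_iff_le, sq_abs]
  rcases lt_trichotomy a b with h | h | h
  · -- a < b
    rcases le_or_gt (-a) b with hc | hc
    · have hk := key_ineq p b a hp1 hp2 h hc
      have e1 : (b - a) ^ 2 = (a - b) ^ 2 := by ring
      have e2 : (|b| ^ (p - 2) * b - |a| ^ (p - 2) * a) * (b - a)
          = (|a| ^ (p - 2) * a - |b| ^ (p - 2) * b) * (a - b) := by ring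
      rw [e1, e2, add_comm |b| |a|] at hk
      exact hk
    · have hk := key_ineq p (-a) (-b) hp1 hp2 (by linarith) (by linarith)
      simp only [abs_neg] at hk
      have e1 : (-a - -b) ^ 2 = (a - b) ^ 2 := by ring
      have e2 : (|a| ^ (p - 2) * -a - |b| ^ (p - 2) * -b) * (-a - -b)
          = (|a| ^ (p - 2) * a - |b| ^ (p - 2) * b) * (a - b) := by ring
      rw [e1, e2] at hk
      exact hk
  · subst h
    simp
  · -- b < a
    rcases le_or_gt (-b) a with hc | hc
    · exact key_ineq p a b hp1 hp2 h hc
    · have hk := key_ineq p (-b) (-a) hp1 hp2 (by linarith) (by linarith)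
      simp only [abs_neg] at hk
      have e1 : (-b - -a) ^ 2 = (a - b) ^ 2 := by ring
      have e2 : (|b| ^ (p - 2) * -b - |a| ^ (p - 2) * -a) * (-b - -a)
          = (|a| ^ (p - 2) * a - |b| ^ (p - 2) * b) * (a - b) := by ring
      rw [e1, e2, add_comm |b| |a|] at hk
      exact hk
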